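/- Let B be a skew brace of nilpotent type (i.e. (B,+) is a nilpotent group) such that B³ = 0. Then B is centrally nilpotent, i.e. there exists a chain of ideals 0 = I₀ ≤ I₁ ≤ … ≤ Iₙ = B such that I_j/I_{j−1} ≤ ζ(B/I_{j−1}) for every 1 ≤ j ≤ n, where ζ denotes the centre of a skew brace. -/

import Mathlib

/-- A (left) skew brace: a set with two group structures `(B,+)` and `(B,·)`
satisfying `a·(b+c) = a·b - a + a·c`. -/
class SkewBrace (B : Type*) extends AddGroup B, Group B where
  mul_add_compat : ∀ a b c : B, a * (b + c) = a * b - a + a * c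

namespace SkewBrace

variable {B : Type*} [SkewBrace B]

/-- The star product `a ∗ b = -a + a·b - b`. -/
def star (a b : B) : B := -a + a * b - b

/-- For subsets `X, Y ⊆ B`, `X ∗ Y` is the additive subgroup generated by
all `x ∗ y` with `x ∈ X`, `y ∈ Y`. -/
def starSet (X Y : Set B) : AddSubgroup B :=
  AddSubgroup.closure (Set.image2 star X Y)

/-- The left series, indexed so that `leftSeries B n = B^{n+1}`:
`leftSeries B 0 = B¹ = B` and `leftSeries B (n+1) = B ∗ leftSeries B n`. -/
def leftSeries (B : Type*) [SkewBrace B] : ℕ → AddSubgroup B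
  | 0 => ⊤
  | n + 1 => starSet Set.univ (leftSeries B n)

/-- The right series, indexed so that `rightSeries B n = B^{(n+1)}`:
`rightSeries B 0 = B^{(1)} = B` and `rightSeries B (n+1) = (rightSeries B n) ∗ B`. -/
def rightSeries (B : Type*) [SkewBrace B] : ℕ → AddSubgroup B
  | 0 => ⊤
  | n + 1 => starSet (rightSeries B n : Set B) Set.univ

end SkewBrace

namespace SkewBrace

variable {B : Type*} [SkewBrace B]

/-- An ideal of a skew brace `B`: a normal subgroup of `(B,+)` with
`I ∗ B ⊆ I` and `B ∗ I ⊆ I`. -/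
def IsIdeal (I : AddSubgroup B) : Prop :=
  (∀ i ∈ I, ∀ b : B, b + i - b ∈ I) ∧
  (∀ i ∈ I, ∀ b : B, star i b ∈ I) ∧
  (∀ i ∈ I, ∀ b : B, star b i ∈ I)

/-- `B` is centrally nilpotent: there is a chain of ideals
`0 = I₀ ≤ I₁ ≤ … ≤ Iₙ = B` with `I_{j+1}/I_j ≤ ζ(B/I_j)`, i.e. for every
`x ∈ I_{j+1}` and `a ∈ B` the elements `a ∗ x`, `x ∗ a` and `[a,x]₊` lie in `I_j`. -/
def CentrallyNilpotent (B : Type*) [SkewBrace B] : Prop :=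
  ∃ (n : ℕ) (I : ℕ → AddSubgroup B),
    I 0 = ⊥ ∧ I n = ⊤ ∧
    (∀ j, IsIdeal (I j)) ∧
    (∀ j, j < n → I j ≤ I (j + 1)) ∧
    (∀ j, j < n → ∀ x ∈ I (j + 1), ∀ a : B,
      star a x ∈ I j ∧ star x a ∈ I j ∧ (-a + -x + a + x) ∈ I j)

end SkewBrace

namespace SkewBraceProof

open AddSubgroup

/-! ### Generic group-identity helpers (proved multiplicatively, used additively). -/
section Helpers
private lemma gh_cancel_mid {G : Type*} [Group G] (x a y : G) :
    x⁻¹ * a * (a⁻¹ * y) = x⁻¹ * y := by group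

private lemma gh_cancel_mid' {G : Type*} [Group G] (x a y : G) :
    x⁻¹ * (a * (a⁻¹ * y)) = x⁻¹ * y := by group

variable {B : Type*} [AddGroup B]

lemma ag_cancel_mid (x a y : B) : -x + a + (-a + y) = -x + y :=
  gh_cancel_mid (G := Multiplicative B) x a y

lemma ag_cancel_mid' (x a y : B) : -x + (a + (-a + y)) = -x + y :=
  gh_cancel_mid' (G := Multiplicative B) x a y

end Helpers

variable {B : Type*} [SkewBrace B]

local notation "σ" => SkewBrace.star (B := B)

def lam (a b : B) : B := -a + a * b

lemma star_def (a b : B) : σ a b = lam a b - b := rfl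

lemma lam_eq_star_add (a b : B) : lam a b = σ a b + b := by
  rw [star_def, sub_add_cancel]

lemma mul_eq_add_lam (a b : B) : a * b = a + lam a b := by
  rw [lam, add_neg_cancel_left]

lemma lam_add (a b c : B) : lam a (b + c) = lam a b + lam a c := by
  simp only [lam, SkewBrace.mul_add_compat, sub_eq_add_neg, add_assoc]

lemma mul_zero' (a : B) : a * (0 : B) = a := by
  have h := SkewBrace.mul_add_compat a 0 0
  rw [add_zero, sub_eq_add_neg, add_assoc] at h
  have h2 : a * 0 + 0 = a * 0 + (-a + a * 0) := by rw [add_zero]; exact h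
  have h3 := add_left_cancel h2
  exact (neg_add_eq_zero.mp h3.symm).symm

lemma one_eq_zero : (1 : B) = (0 : B) := by
  have h := mul_zero' (1 : B); rw [one_mul] at h; exact h.symm

lemma lam_zero (a : B) : lam a (0 : B) = 0 := by
  rw [lam, mul_zero', neg_add_cancel]

lemma lam_neg (a b : B) : lam a (-b) = -lam a b := by
  have h := lam_add a b (-b)
  rw [add_neg_cancel, lam_zero] at h
  exact eq_neg_of_add_eq_zero_right h.symm

lemma lam_mul (a b c : B) : lam (a * b) c = lam a (lam b c) := by
  have h1 : lam a (lam b c) = lam a (-b) + lam a (b * c) := by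
    rw [show lam b c = -b + b * c from rfl, lam_add]
  rw [h1, lam_neg]
  rw [show lam a b = -a + a * b from rfl, show lam a (b*c) = -a + a*(b*c) from rfl]
  rw [neg_add_rev, neg_neg, add_assoc, ag_cancel_mid' (a*b) a (a*(b*c)), lam, mul_assoc]

lemma lam_one (b : B) : lam (1 : B) b = b := by
  rw [lam, one_mul, one_eq_zero, neg_zero, zero_add]

lemma lam_inv_self (a : B) : lam a a⁻¹ = -a := by
  rw [lam, mul_inv_cancel, one_eq_zero, add_zero]

end SkewBraceProof

section Part2
namespace SkewBraceProof
open AddSubgroup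
variable {B : Type*} [SkewBrace B]
local notation "σ" => SkewBrace.star (B := B)
local notation "A𝔸" => SkewBrace.leftSeries B 1

section MoreHelpers
private lemma gh_star_add {G : Type*} [Group G] (p q u v : G) :
    (p * q) * (u * v)⁻¹ = (p * u⁻¹) * u * (q * v⁻¹) * u⁻¹ := by group
private lemma gh_pqd {G : Type*} [Group G] (p q d : G) :
    p * (q * d) * d⁻¹ = p * q := by group
private lemma gh_conj_add {G : Type*} [Group G] (b z w : G) :
    b * (z * w) * b⁻¹ = (b * z * b⁻¹) * (b * w * b⁻¹) := by group
private lemma gh_conj_neg {G : Type*} [Group G] (b z : G) :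
    b * z⁻¹ * b⁻¹ = (b * z * b⁻¹)⁻¹ := by group
private lemma gh_conj_zero {G : Type*} [Group G] (b : G) : b * 1 * b⁻¹ = 1 := by group
private lemma gh_M4 {G : Type*} [Group G] (z K s b : G) :
    z⁻¹ * (K * ((s * b) * z)) * b⁻¹
      = (z⁻¹ * K * z) * (z⁻¹ * s * z) * (z⁻¹ * b * z * b⁻¹) := by group
private lemma gh_KBZ {G : Type*} [Group G] (z b : G) :
    z * b = (z * b * z⁻¹ * b⁻¹) * (b * z) := by group

variable {B' : Type*} [AddGroup B']
lemma ag_star_add (p q u v : B') : (p + q) - (u + v) = (p - u) + u + (q - v) - u := by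
  simp only [sub_eq_add_neg]; exact gh_star_add (G := Multiplicative B') p q u v
lemma ag_pqd (p q d : B') : p + (q + d) - d = p + q := by
  simp only [sub_eq_add_neg]; exact gh_pqd (G := Multiplicative B') p q d
lemma ag_conj_add (b z w : B') : b + (z + w) + -b = (b + z + -b) + (b + w + -b) :=
  gh_conj_add (G := Multiplicative B') b z w
lemma ag_conj_neg (b z : B') : b + (-z) + -b = -(b + z + -b) :=
  gh_conj_neg (G := Multiplicative B') b z
lemma ag_conj_zero (b : B') : b + (0:B') + -b = 0 := gh_conj_zero (G := Multiplicative B') b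
lemma ag_M4 (z K s b : B') :
    -z + (K + ((s + b) + z)) - b
      = (-z + K + z) + (-z + s + z) + (-z + b + z - b) := by
  simp only [sub_eq_add_neg]; exact gh_M4 (G := Multiplicative B') z K s b
end MoreHelpers

lemma star_mem_A (a b : B) : σ a b ∈ A𝔸 :=
  AddSubgroup.subset_closure (Set.mem_image2_of_mem trivial trivial)

lemma star_one (d : B) : σ (1 : B) d = 0 := by
  rw [star_def, lam_one, sub_self]

lemma star_zero_left (d : B) : σ (0 : B) d = 0 := by
  have := star_one (B := B) d; rwa [one_eq_zero] at this

lemma star_add_right (z u v : B) : σ z (u + v) = σ z u + u + σ z v - u := by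
  rw [star_def, lam_add, star_def, star_def, ag_star_add]

section WithH3
variable (h3 : SkewBrace.leftSeries B 2 = ⊥)
include h3

lemma star_fix {z : B} (hz : z ∈ A𝔸) (a : B) : σ a z = 0 := by
  have : σ a z ∈ SkewBrace.leftSeries B 2 :=
    AddSubgroup.subset_closure (Set.mem_image2_of_mem trivial hz)
  rw [h3] at this
  exact this

lemma lam_fix {z : B} (hz : z ∈ A𝔸) (a : B) : lam a z = z := by
  rw [lam_eq_star_add, star_fix h3 hz, zero_add]

lemma mul_A {z : B} (hz : z ∈ A𝔸) (a : B) : a * z = a + z := by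
  rw [mul_eq_add_lam, lam_fix h3 hz]

lemma inv_A {z : B} (hz : z ∈ A𝔸) : z⁻¹ = -z := by
  have : z * (-z) = 1 := by
    rw [mul_eq_add_lam, lam_neg, lam_fix h3 hz, add_neg_cancel, one_eq_zero]
  exact inv_eq_of_mul_eq_one_right this

lemma star_mul_left (u v d : B) : σ (u * v) d = σ v d + σ u d := by
  have h1 : lam (u*v) d = σ v d + lam u d := by
    rw [lam_mul, lam_eq_star_add v d, lam_add, lam_fix h3 (star_mem_A v d)]
  rw [star_def, h1, lam_eq_star_add, ag_pqd]

lemma star_inv_left (u d : B) : σ u⁻¹ d = -(σ u d) := by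
  have h := star_mul_left h3 u u⁻¹ d
  rw [mul_inv_cancel, star_one] at h
  exact eq_neg_of_add_eq_zero_left h.symm

lemma star_antiadd {x y : B} (hx : x ∈ A𝔸) (hy : y ∈ A𝔸) (d : B) :
    σ (x + y) d = σ y d + σ x d := by
  rw [← mul_A h3 hy x]; exact star_mul_left h3 x y d

lemma star_neg_A {x : B} (hx : x ∈ A𝔸) (d : B) : σ (-x) d = -(σ x d) := by
  have h := star_antiadd h3 hx (neg_mem hx) d
  rw [add_neg_cancel, star_zero_left] at h
  exact eq_neg_of_add_eq_zero_left h.symm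

lemma mulconj_A {z : B} (hz : z ∈ A𝔸) (c : B) :
    c * z * c⁻¹ = c + (z + (σ z c⁻¹ + -c)) := by
  rw [mul_assoc, mul_eq_add_lam z c⁻¹, lam_eq_star_add, mul_eq_add_lam c, lam_add,
    lam_add, lam_fix h3 hz, lam_fix h3 (star_mem_A z c⁻¹), lam_inv_self]

lemma star_mulconj (c y d : B) : σ (c * y * c⁻¹) d = σ y (lam c⁻¹ d) := by
  have h1 : lam (c * y * c⁻¹) d = σ y (lam c⁻¹ d) + d := by
    rw [lam_mul, lam_mul, lam_eq_star_add y (lam c⁻¹ d), lam_add,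
      lam_fix h3 (star_mem_A y (lam c⁻¹ d)), ← lam_mul, mul_inv_cancel, lam_one]
  rw [star_def, h1, add_sub_cancel_right]

lemma star_M5 (x b d : B) :
    σ (x * b * x⁻¹ * b⁻¹) d = -(σ b d) + (-(σ x d) + (σ b d + σ x d)) := by
  rw [star_mul_left h3 (x*b*x⁻¹) b⁻¹ d, star_mul_left h3 (x*b) x⁻¹ d,
    star_mul_left h3 x b d, star_inv_left h3, star_inv_left h3]

end WithH3
end SkewBraceProof
end Part2
section Part3
namespace SkewBraceProof
open AddSubgroup
variable {B : Type*} [SkewBrace B]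
local notation "σ" => SkewBrace.star (B := B)
local notation "A𝔸" => SkewBrace.leftSeries B 1

section Helpers3
private lemma gh_nA {G : Type*} [Group G] (p b q : G) :
    p⁻¹ * (p * b * q * b⁻¹) = b * q * b⁻¹ := by group
private lemma gh_neg_comm {G : Type*} [Group G] (u v : G) :
    (u⁻¹ * v⁻¹ * u * v)⁻¹ = v⁻¹ * u⁻¹ * v * u := by group
private lemma gh_conj_comm {G : Type*} [Group G] (b u v : G) :
    b * (u⁻¹ * v⁻¹ * u * v) * b⁻¹
      = (b*u*b⁻¹)⁻¹ * (b*v*b⁻¹)⁻¹ * (b*u*b⁻¹) * (b*v*b⁻¹) := by group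
variable {B' : Type*} [AddGroup B']
lemma ag_nA (p b q : B') : -p + (p + b + q - b) = b + q - b := by
  simp only [sub_eq_add_neg]; exact gh_nA (G := Multiplicative B') p b q
lemma ag_neg_comm (u v : B') : -(-u + -v + u + v) = -v + -u + v + u :=
  gh_neg_comm (G := Multiplicative B') u v
lemma ag_conj_comm (b u v : B') :
    b + (-u + -v + u + v) + -b
      = -(b+u+ -b) + -(b+v+ -b) + (b+u+ -b) + (b+v+ -b) :=
  gh_conj_comm (G := Multiplicative B') b u v
end Helpers3

lemma A_normal : ∀ z ∈ (A𝔸), ∀ b : B, b + z - b ∈ (A𝔸) := by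
  have key : ∀ x y b : B, b + σ x y - b = -(σ x b) + σ x (b + y) := by
    intro x y b
    rw [star_add_right x b y, ag_nA]
  let S : AddSubgroup B :=
    { carrier := {z | ∀ b : B, b + z - b ∈ (A𝔸)}
      zero_mem' := by intro b; simp only [add_zero, sub_self]; exact zero_mem _
      add_mem' := by
        intro z w hz hw b
        have h := ag_conj_add b z w
        rw [sub_eq_add_neg, h]
        exact add_mem (by rw [← sub_eq_add_neg]; exact hz b) (by rw [← sub_eq_add_neg]; exact hw b)
      neg_mem' := by
        intro z hz b
        rw [sub_eq_add_neg, ag_conj_neg]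
        exact neg_mem (by rw [← sub_eq_add_neg]; exact hz b) }
  have hle : (A𝔸) ≤ S := by
    apply AddSubgroup.closure_le S |>.mpr
    rintro w ⟨x, -, y, -, rfl⟩
    intro b
    rw [key x y b]
    exact add_mem (neg_mem (star_mem_A x b)) (star_mem_A x (b + y))
  exact fun z hz => hle hz

section WithH3b
variable (h3 : SkewBrace.leftSeries B 2 = ⊥)
include h3

lemma comm_mem_A {z : B} (hz : z ∈ (A𝔸)) (b : B) : z * b * z⁻¹ * b⁻¹ ∈ (A𝔸) := by
  have hW : b * z⁻¹ * b⁻¹ ∈ (A𝔸) := by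
    rw [inv_A h3 hz, mulconj_A h3 (neg_mem hz) b]
    have : -z + (σ (-z) b⁻¹ + -b) = (-z + σ (-z) b⁻¹) + -b := by rw [add_assoc]
    rw [this, ← add_assoc, ← sub_eq_add_neg]
    exact A_normal _ (add_mem (neg_mem hz) (star_mem_A _ _)) b
  have e : z * b * z⁻¹ * b⁻¹ = z * (b * z⁻¹ * b⁻¹) := by group
  rw [e, mul_A h3 hW z]
  exact add_mem hz hW

lemma star_M4 {z : B} (hz : z ∈ (A𝔸)) (b : B) :
    σ z b = (-z + (z*b*z⁻¹*b⁻¹) + z) + (-z + σ (z*b*z⁻¹*b⁻¹) b + z) + (-z + b + z - b) := by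
  set K := z*b*z⁻¹*b⁻¹ with hK
  have e1 : z * b = K * (b + z) := by
    rw [← mul_A h3 hz b, hK]; group
  have e2 : K * (b + z) = K + (lam K b + z) := by
    rw [mul_eq_add_lam, lam_add, lam_fix h3 hz K]
  have e3 : z + lam z b = K + (lam K b + z) := by
    rw [← mul_eq_add_lam, e1, e2]
  have e4 : lam z b = -z + (K + (lam K b + z)) := by
    rw [← e3, neg_add_cancel_left]
  rw [star_def, e4, lam_eq_star_add K b, ag_M4]

end WithH3b

/-! ### lower central series of `(A,+)` -/

def gamA (B : Type*) [SkewBrace B] : ℕ → AddSubgroup B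
  | 0 => SkewBrace.leftSeries B 1
  | n+1 => AddSubgroup.closure
      {w | ∃ u ∈ SkewBrace.leftSeries B 1, ∃ v ∈ gamA B n, w = -u + -v + u + v}

lemma gamA_le_A : ∀ n, gamA B n ≤ (A𝔸)
  | 0 => le_refl _
  | n+1 => by
    apply AddSubgroup.closure_le _ |>.mpr
    rintro w ⟨u, hu, v, hv, rfl⟩
    exact add_mem (add_mem (add_mem (neg_mem hu) (neg_mem (gamA_le_A n hv))) hu)
      (gamA_le_A n hv)

lemma gamA_comm_mem {u v : B} {n : ℕ} (hu : u ∈ (A𝔸)) (hv : v ∈ gamA B n) :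
    -u + -v + u + v ∈ gamA B (n+1) :=
  AddSubgroup.subset_closure ⟨u, hu, v, hv, rfl⟩

lemma gamA_comm_mem' {u v : B} {n : ℕ} (hu : u ∈ (A𝔸)) (hv : v ∈ gamA B n) :
    -v + -u + v + u ∈ gamA B (n+1) := by
  have := neg_mem (gamA_comm_mem hu hv)
  rwa [ag_neg_comm] at this

lemma gamA_normal : ∀ n, ∀ z ∈ gamA B n, ∀ b : B, b + z - b ∈ gamA B n
  | 0 => A_normal
  | n+1 => by
    intro z hz b
    let S : AddSubgroup B :=
      { carrier := {z | ∀ b : B, b + z - b ∈ gamA B (n+1)}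
        zero_mem' := by intro b; simp only [add_zero, sub_self]; exact zero_mem _
        add_mem' := by
          intro z w hz hw b
          rw [sub_eq_add_neg, ag_conj_add]
          exact add_mem (by rw [← sub_eq_add_neg]; exact hz b)
            (by rw [← sub_eq_add_neg]; exact hw b)
        neg_mem' := by
          intro z hz b
          rw [sub_eq_add_neg, ag_conj_neg]
          exact neg_mem (by rw [← sub_eq_add_neg]; exact hz b) }
    have hle : gamA B (n+1) ≤ S := by
      apply AddSubgroup.closure_le S |>.mpr
      rintro w ⟨u, hu, v, hv, rfl⟩
      intro b
      rw [sub_eq_add_neg, ag_conj_comm]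
      have hu' : b + u + -b ∈ (A𝔸) := by
        rw [← sub_eq_add_neg]; exact A_normal u hu b
      have hv' : b + v + -b ∈ gamA B n := by
        rw [← sub_eq_add_neg]; exact gamA_normal n v hv b
      exact AddSubgroup.subset_closure ⟨_, hu', _, hv', rfl⟩
    exact hle hz b

section WithH3c
variable (h3 : SkewBrace.leftSeries B 2 = ⊥)
include h3

lemma gamA_star : ∀ n, ∀ z ∈ gamA B n, ∀ d : B, σ z d ∈ gamA B n
  | 0 => fun z _ d => star_mem_A z d
  | n+1 => by
    intro z hz d
    let T : AddSubgroup B :=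
      { carrier := {z | z ∈ (A𝔸) ∧ ∀ d : B, σ z d ∈ gamA B (n+1)}
        zero_mem' := ⟨zero_mem _, fun d => by rw [star_zero_left]; exact zero_mem _⟩
        add_mem' := by
          rintro z w ⟨hzA, hz⟩ ⟨hwA, hw⟩
          exact ⟨add_mem hzA hwA, fun d => by
            rw [star_antiadd h3 hzA hwA d]; exact add_mem (hw d) (hz d)⟩
        neg_mem' := by
          rintro z ⟨hzA, hz⟩
          exact ⟨neg_mem hzA, fun d => by
            rw [star_neg_A h3 hzA d]; exact neg_mem (hz d)⟩ }
    have hle : gamA B (n+1) ≤ T := by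
      apply AddSubgroup.closure_le T |>.mpr
      rintro w ⟨u, hu, v, hv, rfl⟩
      have hvA : v ∈ (A𝔸) := gamA_le_A n hv
      have h1 : -u + -v + u ∈ (A𝔸) := add_mem (add_mem (neg_mem hu) (neg_mem hvA)) hu
      have h2 : -u + -v ∈ (A𝔸) := add_mem (neg_mem hu) (neg_mem hvA)
      constructor
      · exact add_mem h1 hvA
      · intro d
        rw [star_antiadd h3 h1 hvA d, star_antiadd h3 h2 hu d,
          star_antiadd h3 (neg_mem hu) (neg_mem hvA) d,
          star_neg_A h3 hvA d, star_neg_A h3 hu d]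
        have target := gamA_comm_mem' (B := B) (n := n)
          (neg_mem (star_mem_A u d)) (neg_mem (gamA_star n v hv d))
        rw [neg_neg, neg_neg] at target
        have e : σ v d + (σ u d + (-(σ v d) + -(σ u d)))
            = σ v d + σ u d + -(σ v d) + -(σ u d) := by
          simp only [add_assoc]
        rw [e]
        exact target
    exact (hle hz).2 d

end WithH3c
end SkewBraceProof
end Part3
section Part4
namespace SkewBraceProof
open AddSubgroup
variable {B : Type*} [SkewBrace B]
local notation "σ" => SkewBrace.star (B := B)
local notation "A𝔸" => SkewBrace.leftSeries B 1

section Helpers4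
variable {B' : Type*} [AddGroup B']
private lemma gh_conj_conj {G : Type*} [Group G] (b c y : G) :
    b * (c * y * c⁻¹) * b⁻¹ = (b*c) * y * (b*c)⁻¹ := by group
private lemma gh_conj_decomp {G : Type*} [Group G] (c y s : G) :
    c * y * c⁻¹ = (c * (y * (s * c⁻¹))) * (c * s⁻¹ * c⁻¹) := by group
lemma ag_conj_conj (b c y : B') : b + (c + y - c) - b = (b+c) + y - (b+c) := by
  simp only [sub_eq_add_neg, neg_add_rev]
  have := gh_conj_conj (G := Multiplicative B') b c y
  rw [← neg_add_rev]; exact this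
lemma ag_conj_decomp (c y s : B') :
    c + y - c = (c + (y + (s + -c))) + (c + -s - c) := by
  simp only [sub_eq_add_neg]
  exact gh_conj_decomp (G := Multiplicative B') c y s
end Helpers4

/-! ### the `e`-series of iterated multiplicative commutators -/

def eS (B : Type*) [SkewBrace B] : ℕ → AddSubgroup B
  | 0 => SkewBrace.leftSeries B 1
  | n+1 => AddSubgroup.closure {w | ∃ x ∈ eS B n, ∃ b : B, w = x*b*x⁻¹*b⁻¹}

section WithH3d
variable (h3 : SkewBrace.leftSeries B 2 = ⊥)
include h3

lemma eS_le_A : ∀ n, eS B n ≤ (A𝔸)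
  | 0 => le_refl _
  | n+1 => by
    apply AddSubgroup.closure_le _ |>.mpr
    rintro w ⟨x, hx, b, rfl⟩
    exact comm_mem_A h3 (eS_le_A n hx) b

lemma eS_star : ∀ n, ∀ x ∈ eS B n, ∀ d : B, σ x d ∈ gamA B n
  | 0 => fun x _ d => star_mem_A x d
  | n+1 => by
    intro z hz d
    let T : AddSubgroup B :=
      { carrier := {z | z ∈ (A𝔸) ∧ ∀ d : B, σ z d ∈ gamA B (n+1)}
        zero_mem' := ⟨zero_mem _, fun d => by rw [star_zero_left]; exact zero_mem _⟩
        add_mem' := by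
          rintro z w ⟨hzA, hz⟩ ⟨hwA, hw⟩
          exact ⟨add_mem hzA hwA, fun d => by
            rw [star_antiadd h3 hzA hwA d]; exact add_mem (hw d) (hz d)⟩
        neg_mem' := by
          rintro z ⟨hzA, hz⟩
          exact ⟨neg_mem hzA, fun d => by
            rw [star_neg_A h3 hzA d]; exact neg_mem (hz d)⟩ }
    have hle : eS B (n+1) ≤ T := by
      apply AddSubgroup.closure_le T |>.mpr
      rintro w ⟨x, hx, b, rfl⟩
      refine ⟨comm_mem_A h3 (eS_le_A h3 n hx) b, fun d => ?_⟩
      rw [star_M5 h3 x b d]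
      have target := gamA_comm_mem (B := B) (n := n)
        (star_mem_A b d) (eS_star n x hx d)
      simp only [add_assoc] at target ⊢
      exact target
    exact (hle hz).2 d

lemma gamA_le_eS : ∀ n, gamA B n ≤ eS B n
  | 0 => le_refl _
  | n+1 => by
    apply AddSubgroup.closure_le _ |>.mpr
    rintro w ⟨u, hu, v, hv, rfl⟩
    have hvA : v ∈ (A𝔸) := gamA_le_A n hv
    have hp : -v ∈ eS B n := neg_mem (gamA_le_eS n hv)
    have e : (-v)*(-u)*(-v)⁻¹*(-u)⁻¹ = -v + -u + v + u := by
      rw [inv_A h3 (neg_mem hvA), inv_A h3 (neg_mem hu), neg_neg, neg_neg,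
        mul_A h3 (neg_mem hu) (-v), mul_A h3 hvA (-v + -u), mul_A h3 hu (-v + -u + v)]
    have e2 : -u + -v + u + v = -((-v)*(-u)*(-v)⁻¹*(-u)⁻¹) := by
      rw [e, ag_neg_comm v u]
    rw [e2]
    exact neg_mem (AddSubgroup.subset_closure ⟨-v, hp, -u, rfl⟩)
end WithH3d

/-! ### the `D`-series: normal closures of the `e`-series -/

def DS (B : Type*) [SkewBrace B] (n : ℕ) : AddSubgroup B :=
  AddSubgroup.closure {w | ∃ y ∈ eS B n, ∃ c : B, w = c + y - c}

lemma DS_normal {n : ℕ} : ∀ z ∈ DS B n, ∀ b : B, b + z - b ∈ DS B n := by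
  intro z hz b
  let S : AddSubgroup B :=
    { carrier := {z | ∀ b : B, b + z - b ∈ DS B n}
      zero_mem' := by intro b; simp only [add_zero, sub_self]; exact zero_mem _
      add_mem' := by
        intro z w hz hw b
        rw [sub_eq_add_neg, ag_conj_add]
        exact add_mem (by rw [← sub_eq_add_neg]; exact hz b)
          (by rw [← sub_eq_add_neg]; exact hw b)
      neg_mem' := by
        intro z hz b
        rw [sub_eq_add_neg, ag_conj_neg]
        exact neg_mem (by rw [← sub_eq_add_neg]; exact hz b) }
  have hle : DS B n ≤ S := by
    apply AddSubgroup.closure_le S |>.mpr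
    rintro w ⟨y, hy, c, rfl⟩
    intro b
    rw [ag_conj_conj]
    exact AddSubgroup.subset_closure ⟨y, hy, b + c, rfl⟩
  exact hle hz b

lemma eS_le_DS {n : ℕ} : eS B n ≤ DS B n := by
  intro x hx
  have : x = 0 + x - 0 := by rw [zero_add, sub_zero]
  rw [this]
  exact AddSubgroup.subset_closure ⟨x, hx, 0, rfl⟩

section WithH3e
variable (h3 : SkewBrace.leftSeries B 2 = ⊥)
include h3

lemma DS_le_A {n : ℕ} : DS B n ≤ (A𝔸) := by
  apply AddSubgroup.closure_le _ |>.mpr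
  rintro w ⟨y, hy, c, rfl⟩
  exact A_normal y (eS_le_A h3 n hy) c

lemma gamA_le_DS {n : ℕ} : gamA B n ≤ DS B n :=
  le_trans (gamA_le_eS h3 n) eS_le_DS

/-- decomposition of an additive conjugate into a multiplicative conjugate and a
γ-correction: `c + y - c = (c·y·c⁻¹) + (c + -(y∗c⁻¹) - c)`. -/
lemma conj_decomp {y : B} (hy : y ∈ (A𝔸)) (c : B) :
    c + y - c = (c*y*c⁻¹) + (c + -(σ y c⁻¹) - c) := by
  rw [mulconj_A h3 hy c]
  exact ag_conj_decomp c y (σ y c⁻¹)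

lemma DS_star {n : ℕ} : ∀ z ∈ DS B n, ∀ d : B, σ z d ∈ gamA B n := by
  intro z hz d
  let T : AddSubgroup B :=
    { carrier := {z | z ∈ (A𝔸) ∧ ∀ d : B, σ z d ∈ gamA B n}
      zero_mem' := ⟨zero_mem _, fun d => by rw [star_zero_left]; exact zero_mem _⟩
      add_mem' := by
        rintro z w ⟨hzA, hz⟩ ⟨hwA, hw⟩
        exact ⟨add_mem hzA hwA, fun d => by
          rw [star_antiadd h3 hzA hwA d]; exact add_mem (hw d) (hz d)⟩
      neg_mem' := by
        rintro z ⟨hzA, hz⟩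
        exact ⟨neg_mem hzA, fun d => by
          rw [star_neg_A h3 hzA d]; exact neg_mem (hz d)⟩ }
  have hle : DS B n ≤ T := by
    apply AddSubgroup.closure_le T |>.mpr
    rintro w ⟨y, hy, c, rfl⟩
    have hyA : y ∈ (A𝔸) := eS_le_A h3 n hy
    have hsy : σ y c⁻¹ ∈ gamA B n := eS_star h3 n y hy c⁻¹
    have hQ : c + -(σ y c⁻¹) - c ∈ gamA B n :=
      gamA_normal n _ (neg_mem hsy) c
    have hP : c*y*c⁻¹ ∈ (A𝔸) := by
      rw [mulconj_A h3 hyA c]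
      have e : y + (σ y c⁻¹ + -c) = (y + σ y c⁻¹) + -c := by rw [add_assoc]
      rw [e, ← sub_eq_add_neg, ← add_sub_assoc]
      exact A_normal _ (add_mem hyA (star_mem_A y c⁻¹)) c
    constructor
    · exact A_normal y hyA c
    · intro d
      rw [conj_decomp h3 hyA c, star_antiadd h3 hP (gamA_le_A n hQ) d]
      refine add_mem (gamA_star h3 n _ hQ d) ?_
      rw [star_mulconj h3 c y d]
      exact eS_star h3 n y hy (lam c⁻¹ d)
  exact (hle hz).2 d

lemma eS_succ_le_DS {n : ℕ} : eS B (n+1) ≤ DS B n := by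
  apply AddSubgroup.closure_le _ |>.mpr
  rintro w ⟨x, hx, b, rfl⟩
  have hxA : x ∈ (A𝔸) := eS_le_A h3 n hx
  have hW : b * x⁻¹ * b⁻¹ ∈ DS B n := by
    rw [inv_A h3 hxA, mulconj_A h3 (neg_mem hxA) b]
    have e : -x + (σ (-x) b⁻¹ + -b) = (-x + σ (-x) b⁻¹) + -b := by rw [add_assoc]
    rw [e, ← sub_eq_add_neg, ← add_sub_assoc]
    refine DS_normal _ ?_ b
    refine add_mem (neg_mem (eS_le_DS hx)) ?_
    rw [star_neg_A h3 hxA]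
    exact neg_mem (gamA_le_DS h3 (eS_star h3 n x hx b⁻¹))
  have e2 : x*b*x⁻¹*b⁻¹ = x * (b*x⁻¹*b⁻¹) := by group
  rw [e2, mul_A h3 (DS_le_A h3 hW) x]
  exact add_mem (eS_le_DS hx) hW

lemma DS_succ_le {n : ℕ} : DS B (n+1) ≤ DS B n := by
  apply AddSubgroup.closure_le _ |>.mpr
  rintro w ⟨y, hy, c, rfl⟩
  exact DS_normal _ (eS_succ_le_DS h3 hy) c

lemma DS_mult_conj {n : ℕ} {z : B} (hz : z ∈ DS B n) (c : B) :
    c * z * c⁻¹ ∈ DS B n := by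
  rw [mulconj_A h3 (DS_le_A h3 hz) c]
  have e : z + (σ z c⁻¹ + -c) = (z + σ z c⁻¹) + -c := by rw [add_assoc]
  rw [e, ← sub_eq_add_neg, ← add_sub_assoc]
  exact DS_normal _ (add_mem hz (gamA_le_DS h3 (DS_star h3 z hz c⁻¹))) c

end WithH3e
end SkewBraceProof
end Part4
section Part5
namespace SkewBraceProof
open AddSubgroup
variable {B : Type*} [SkewBrace B]
local notation "σ" => SkewBrace.star (B := B)
local notation "A𝔸" => SkewBrace.leftSeries B 1

section WithH3f
variable (h3 : SkewBrace.leftSeries B 2 = ⊥)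
include h3

omit h3 in
lemma eS_comm_mem {n : ℕ} {x : B} (hx : x ∈ eS B n) (b : B) :
    x*b*x⁻¹*b⁻¹ ∈ eS B (n+1) :=
  AddSubgroup.subset_closure ⟨x, hx, b, rfl⟩

lemma DS_comm_mem {n : ℕ} : ∀ z ∈ DS B n, ∀ b : B, z*b*z⁻¹*b⁻¹ ∈ DS B (n+1) := by
  intro z hz b
  let S : AddSubgroup B :=
    { carrier := {z | z ∈ (A𝔸) ∧ ∀ b : B, z*b*z⁻¹*b⁻¹ ∈ DS B (n+1)}
      zero_mem' := by
        constructor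
        · exact zero_mem _
        · intro b
          rw [← one_eq_zero]
          have e : (1:B)*b*(1:B)⁻¹*b⁻¹ = 1 := by group
          rw [e, one_eq_zero]
          exact zero_mem _
      add_mem' := by
        rintro z w ⟨hzA, hz⟩ ⟨hwA, hw⟩
        refine ⟨add_mem hzA hwA, fun b => ?_⟩
        rw [← mul_A h3 hwA z]
        have e : (z*w)*b*(z*w)⁻¹*b⁻¹ = (z*(w*b*w⁻¹*b⁻¹)*z⁻¹) * (z*b*z⁻¹*b⁻¹) := by
          group
        rw [e]
        have h1 : z*(w*b*w⁻¹*b⁻¹)*z⁻¹ ∈ DS B (n+1) := DS_mult_conj h3 (hw b) z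
        rw [mul_A h3 (DS_le_A h3 (hz b)) _]
        exact add_mem h1 (hz b)
      neg_mem' := by
        rintro z ⟨hzA, hz⟩
        refine ⟨neg_mem hzA, fun b => ?_⟩
        rw [← inv_A h3 hzA]
        have e : z⁻¹*b*(z⁻¹)⁻¹*b⁻¹ = z⁻¹*((z*b*z⁻¹*b⁻¹)⁻¹)*z := by group
        rw [e, inv_A h3 (DS_le_A h3 (hz b))]
        have : z⁻¹ * -(z*b*z⁻¹*b⁻¹) * z ∈ DS B (n+1) := by
          have h2 := DS_mult_conj h3 (neg_mem (hz b)) z⁻¹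
          rwa [inv_inv] at h2
        exact this }
  have hle : DS B n ≤ S := by
    apply AddSubgroup.closure_le S |>.mpr
    rintro w ⟨y, hy, c, rfl⟩
    have hyA : y ∈ (A𝔸) := eS_le_A h3 n hy
    -- decompose  c + y - c = P + Q
    have hdec := conj_decomp h3 hyA c
    have hPmem : (c*y*c⁻¹) ∈ S := by
      constructor
      · rw [mulconj_A h3 hyA c]
        have e : y + (σ y c⁻¹ + -c) = (y + σ y c⁻¹) + -c := by rw [add_assoc]
        rw [e, ← sub_eq_add_neg, ← add_sub_assoc]
        exact A_normal _ (add_mem hyA (star_mem_A y c⁻¹)) c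
      · intro b
        have e : (c*y*c⁻¹)*b*(c*y*c⁻¹)⁻¹*b⁻¹
            = c*( y*(c⁻¹*b*c)*y⁻¹*(c⁻¹*b*c)⁻¹ )*c⁻¹ := by group
        rw [e]
        exact DS_mult_conj h3 (eS_le_DS (eS_comm_mem hy (c⁻¹*b*c))) c
    have hQmem : (c + -(σ y c⁻¹) - c) ∈ S := by
      have hQgam : c + -(σ y c⁻¹) - c ∈ gamA B n :=
        gamA_normal n _ (neg_mem (eS_star h3 n y hy c⁻¹)) c
      constructor
      · exact gamA_le_A n hQgam
      · intro b
        exact eS_le_DS (eS_comm_mem (gamA_le_eS h3 n hQgam) b)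
    rw [hdec]
    exact add_mem hPmem hQmem
  exact (hle hz).2 b

lemma DS_R4 {n : ℕ} {z : B} (hz : z ∈ DS B n) (b : B) :
    ∃ ξ ∈ DS B (n+1), σ z b = ξ + (-z + b + z - b) := by
  have hM4 := star_M4 h3 (DS_le_A h3 hz) b
  set K := z*b*z⁻¹*b⁻¹ with hK
  have hKmem : K ∈ DS B (n+1) := DS_comm_mem h3 z hz b
  have hC1 : -z + K + z ∈ DS B (n+1) := by
    have := DS_normal (n := n+1) K hKmem (-z)
    rwa [sub_eq_add_neg, neg_neg] at this
  have hC2 : -z + σ K b + z ∈ DS B (n+1) := by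
    have hσ : σ K b ∈ DS B (n+1) := gamA_le_DS h3 (DS_star h3 K hKmem b)
    have := DS_normal (n := n+1) _ hσ (-z)
    rwa [sub_eq_add_neg, neg_neg] at this
  refine ⟨(-z + K + z) + (-z + σ K b + z), add_mem hC1 hC2, ?_⟩
  exact hM4

end WithH3f
end SkewBraceProof
end Part5
section Part6
namespace SkewBraceProof
open AddSubgroup
variable {B : Type*} [SkewBrace B]
local notation "σ" => SkewBrace.star (B := B)
local notation "A𝔸" => SkewBrace.leftSeries B 1

/-! ### upper central series of `(B,+)` -/

def Zc (B : Type*) [SkewBrace B] (m : ℕ) : AddSubgroup B :=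
  Subgroup.toAddSubgroup' (upperCentralSeries (Multiplicative B) m)

lemma mem_Zc {m : ℕ} {x : B} :
    x ∈ Zc B m ↔ Multiplicative.ofAdd x ∈ upperCentralSeries (Multiplicative B) m :=
  Iff.rfl

lemma Zc_zero : Zc B 0 = ⊥ := by
  rw [Zc]; change Subgroup.toAddSubgroup' (Subgroup.upperCentralSeries (Multiplicative B) 0) = ⊥; rw [Subgroup.upperCentralSeries_zero]
  exact map_bot _

lemma Zc_exists_top [Group.IsNilpotent (Multiplicative B)] : ∃ N, Zc B N = ⊤ := by
  obtain ⟨N, hN⟩ := Group.IsNilpotent.nilpotent (G := Multiplicative B)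
  exact ⟨N, by rw [Zc]; change Subgroup.toAddSubgroup' (Subgroup.upperCentralSeries (Multiplicative B) N) = ⊤; rw [hN]; exact map_top _⟩

lemma Zc_mono {m m' : ℕ} (h : m ≤ m') : Zc B m ≤ Zc B m' :=
  (Subgroup.toAddSubgroup').monotone (upperCentralSeries_mono _ h)

lemma Zc_normal {m : ℕ} {z : B} (hz : z ∈ Zc B m) (b : B) : b + z - b ∈ Zc B m := by
  rw [sub_eq_add_neg]
  exact Subgroup.Normal.conj_mem (inferInstanceAs (Subgroup.upperCentralSeries (Multiplicative B) m).Normal)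
    (Multiplicative.ofAdd z) hz (Multiplicative.ofAdd b)

lemma Zc_comm {m : ℕ} {x : B} (hx : x ∈ Zc B (m+1)) (y : B) :
    x + y + -x + -y ∈ Zc B m :=
  (mem_upperCentralSeries_succ_iff (G := Multiplicative B)).mp hx (Multiplicative.ofAdd y)

lemma Zc_comm1 {m : ℕ} {x : B} (hx : x ∈ Zc B (m+1)) (a : B) :
    -a + -x + a + x ∈ Zc B m := by
  have h := Zc_comm (neg_mem hx) (-a)
  rw [neg_neg, neg_neg] at h
  have := neg_mem h
  rwa [ag_neg_comm] at this

lemma Zc_comm2 {m : ℕ} {y : B} (hy : y ∈ Zc B (m+1)) (a : B) :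
    -y + a + y - a ∈ Zc B m := by
  have h := Zc_comm (neg_mem hy) a
  rw [neg_neg, sub_eq_add_neg] at *
  exact h

/-! ### additive lower central series (ad hoc) -/

def gB (B : Type*) [SkewBrace B] : ℕ → AddSubgroup B
  | 0 => ⊤
  | n+1 => AddSubgroup.closure {w | ∃ v ∈ gB B n, ∃ b : B, w = -v + -b + v + b}

lemma gB_le_Zc {N : ℕ} (hN : Zc B N = ⊤) : ∀ k, gB B k ≤ Zc B (N - k) := by
  intro k
  induction k with
  | zero => rw [Nat.sub_zero, hN]; exact le_top
  | succ k ih =>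
    apply AddSubgroup.closure_le _ |>.mpr
    rintro w ⟨v, hv, b, rfl⟩
    by_cases hk : k < N
    · have he : N - k = (N - (k+1)) + 1 := by omega
      rw [he] at ih
      have hv' : v ∈ Zc B ((N - (k+1)) + 1) := ih hv
      have h := Zc_comm (neg_mem hv') (-b)
      rwa [neg_neg, neg_neg] at h
    · have he : N - k = 0 := by omega
      have he' : N - (k+1) = 0 := by omega
      rw [he, Zc_zero] at ih
      rw [he', Zc_zero]
      have hv0 : v = 0 := by simpa using ih hv
      subst hv0
      simp

lemma gB_bot {N : ℕ} (hN : Zc B N = ⊤) : gB B N = ⊥ := by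
  have := gB_le_Zc hN N
  rw [Nat.sub_self, Zc_zero] at this
  exact le_bot_iff.mp this

lemma gamA_le_gB : ∀ n, gamA B n ≤ gB B n
  | 0 => le_top
  | n+1 => by
    apply AddSubgroup.closure_le _ |>.mpr
    rintro w ⟨u, hu, v, hv, rfl⟩
    have hv' : v ∈ gB B n := gamA_le_gB n hv
    have hgen : -v + -u + v + u ∈ gB B (n+1) :=
      AddSubgroup.subset_closure ⟨v, hv', u, rfl⟩
    have := neg_mem hgen
    rwa [ag_neg_comm] at this

section WithH3g
variable (h3 : SkewBrace.leftSeries B 2 = ⊥)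
include h3

lemma eS_deep {N : ℕ} (hN : Zc B N = ⊤) :
    ∀ r, ∀ x ∈ eS B (N + r), (x ∈ gB B r ∧ ∀ d : B, σ x d = 0) := by
  intro r
  induction r with
  | zero =>
    intro x hx
    refine ⟨AddSubgroup.mem_top x, fun d => ?_⟩
    have h1 : σ x d ∈ gamA B N := eS_star h3 N x (by rwa [Nat.add_zero] at hx) d
    have h2 : σ x d ∈ gB B N := gamA_le_gB N h1
    rw [gB_bot hN] at h2
    simpa using h2
  | succ r ih =>
    intro z hz
    let S : AddSubgroup B :=
      { carrier := {z | z ∈ (A𝔸) ∧ z ∈ gB B (r+1) ∧ ∀ d : B, σ z d = 0}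
        zero_mem' := ⟨zero_mem _, zero_mem _, fun d => star_zero_left d⟩
        add_mem' := by
          rintro z w ⟨hzA, hzg, hz⟩ ⟨hwA, hwg, hw⟩
          exact ⟨add_mem hzA hwA, add_mem hzg hwg, fun d => by
            rw [star_antiadd h3 hzA hwA d, hz d, hw d, add_zero]⟩
        neg_mem' := by
          rintro z ⟨hzA, hzg, hz⟩
          exact ⟨neg_mem hzA, neg_mem hzg, fun d => by
            rw [star_neg_A h3 hzA d, hz d, neg_zero]⟩ }
    have hle : eS B (N + (r+1)) ≤ S := by
      have heq : N + (r+1) = (N + r) + 1 := by omega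
      rw [heq]
      apply AddSubgroup.closure_le S |>.mpr
      rintro w ⟨x, hx, b, rfl⟩
      obtain ⟨hxg, hxs⟩ := ih x hx
      have hxA : x ∈ (A𝔸) := eS_le_A h3 _ hx
      have hlamx : ∀ w : B, lam x w = w := fun w => by
        rw [lam_eq_star_add, hxs w, zero_add]
      have hlamxi : ∀ w : B, lam x⁻¹ w = w := fun w => by
        rw [lam_eq_star_add, star_inv_left h3, hxs w, neg_zero, zero_add]
      -- compute the commutator additively
      have hKeq : x*b*x⁻¹*b⁻¹ = x + b + -x + -b := by
        have e1 : x*b = x + b := by rw [mul_eq_add_lam, hlamx b]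
        have e2 : x*b*x⁻¹ = x + b + -x := by
          rw [mul_eq_add_lam (x*b) x⁻¹, e1, inv_A h3 hxA, lam_neg,
            lam_eq_star_add, star_fix h3 hxA, zero_add]
        have e3 : lam (x*b*x⁻¹) b⁻¹ = -b := by
          rw [lam_mul, lam_mul, hlamxi b⁻¹, lam_inv_self, lam_neg, hlamx b]
        rw [mul_eq_add_lam (x*b*x⁻¹) b⁻¹, e3, e2]
      constructor
      · exact comm_mem_A h3 hxA b
      constructor
      · rw [hKeq]
        have : -(-x) + -(-b) + -x + -b ∈ gB B (r+1) :=
          AddSubgroup.subset_closure ⟨-x, neg_mem hxg, -b, rfl⟩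
        rwa [neg_neg, neg_neg] at this
      · intro d
        rw [star_M5 h3 x b d, hxs d]
        simp
    exact ⟨(hle hz).2.1, (hle hz).2.2⟩

lemma eS_bot {N : ℕ} (hN : Zc B N = ⊤) : eS B (N + N) = ⊥ := by
  apply le_bot_iff.mp
  intro x hx
  have := (eS_deep h3 hN N x hx).1
  rw [gB_bot hN] at this
  simpa using this

lemma DS_bot {N : ℕ} (hN : Zc B N = ⊤) : DS B (N + N) = ⊥ := by
  apply le_bot_iff.mp
  apply AddSubgroup.closure_le _ |>.mpr
  rintro w ⟨y, hy, c, rfl⟩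
  rw [eS_bot h3 hN] at hy
  have : y = 0 := by simpa using hy
  subst this
  simp

lemma DS_zero : DS B 0 = (A𝔸) := by
  exact le_antisymm (DS_le_A (n := 0) h3) (eS_le_DS (n := 0))

end WithH3g
end SkewBraceProof
end Part6
section Part7
namespace SkewBraceProof
open AddSubgroup
variable {B : Type*} [SkewBrace B]
local notation "σ" => SkewBrace.star (B := B)
local notation "A𝔸" => SkewBrace.leftSeries B 1

section Helpers7
private lemma gh_comm_split {G : Type*} [Group G] (a p q : G) :
    a⁻¹ * (p*q)⁻¹ * a * (p*q) = (a⁻¹*q⁻¹*a*q) * (q⁻¹*(a⁻¹*p⁻¹*a*p)*q) := by group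
private lemma gh_sup_add {G : Type*} [Group G] (p q p' q' : G) :
    (p * q) * (p' * q') = (p * (q * p' * q⁻¹)) * (q * q') := by group
private lemma gh_sup_neg {G : Type*} [Group G] (p q : G) :
    (p * q)⁻¹ = (q⁻¹ * p⁻¹ * q) * q⁻¹ := by group
private lemma gh_shape1 {G : Type*} [Group G] (z b : G) :
    z⁻¹ * b * z * b⁻¹ = z⁻¹ * (b * z * b⁻¹) := by group
variable {B' : Type*} [AddGroup B']
lemma ag_comm_split (a p q : B') :
    -a + -(p+q) + a + (p+q) = (-a + -q + a + q) + (-q + (-a + -p + a + p) + q) := by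
  have := gh_comm_split (G := Multiplicative B') a p q
  exact this
lemma ag_sup_add (p q p' q' : B') :
    (p + q) + (p' + q') = (p + (q + p' - q)) + (q + q') := by
  simp only [sub_eq_add_neg]; exact gh_sup_add (G := Multiplicative B') p q p' q'
lemma ag_sup_neg (p q : B') : -(p + q) = (-q + -p + q) + -q :=
  gh_sup_neg (G := Multiplicative B') p q
lemma ag_shape1 (z b : B') : -z + b + z - b = -z + (b + z - b) := by
  simp only [sub_eq_add_neg]; exact gh_shape1 (G := Multiplicative B') z b
end Helpers7

/-- decomposition of membership in a sup of two additive subgroups, the first normal -/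
lemma mem_sup_decomp {N₁ N₂ : AddSubgroup B}
    (h1 : ∀ z ∈ N₁, ∀ b : B, b + z - b ∈ N₁) {x : B} (hx : x ∈ N₁ ⊔ N₂) :
    ∃ p ∈ N₁, ∃ q ∈ N₂, x = p + q := by
  let W : AddSubgroup B :=
    { carrier := {x | ∃ p ∈ N₁, ∃ q ∈ N₂, x = p + q}
      zero_mem' := ⟨0, zero_mem _, 0, zero_mem _, by rw [add_zero]⟩
      add_mem' := by
        rintro x y ⟨p, hp, q, hq, rfl⟩ ⟨p', hp', q', hq', rfl⟩
        exact ⟨p + (q + p' - q), add_mem hp (h1 p' hp' q), q + q', add_mem hq hq',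
          ag_sup_add p q p' q'⟩
      neg_mem' := by
        rintro x ⟨p, hp, q, hq, rfl⟩
        refine ⟨-q + -p + q, ?_, -q, neg_mem hq, ag_sup_neg p q⟩
        have := h1 (-p) (neg_mem hp) (-q)
        rwa [sub_neg_eq_add] at this }
  have hle : N₁ ⊔ N₂ ≤ W := by
    apply sup_le
    · intro z hz; exact ⟨z, hz, 0, zero_mem _, by rw [add_zero]⟩
    · intro z hz; exact ⟨0, zero_mem _, z, hz, by rw [zero_add]⟩
  exact hle hx

/-- `-z + b + z - b ∈ U` whenever `U` is closed under conjugation and `z ∈ U`. -/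
lemma comm_shape_mem {U : AddSubgroup B}
    (hnorm : ∀ z ∈ U, ∀ b : B, b + z - b ∈ U) {z : B} (hz : z ∈ U) (b : B) :
    -z + b + z - b ∈ U := by
  rw [ag_shape1]
  exact add_mem (neg_mem hz) (hnorm z hz b)

/-- `-a + -q + a + q ∈ U` whenever `U` is closed under conjugation and `q ∈ U`. -/
lemma comm_shape2_mem {U : AddSubgroup B}
    (hnorm : ∀ z ∈ U, ∀ b : B, b + z - b ∈ U) {q : B} (hq : q ∈ U) (a : B) :
    -a + -q + a + q ∈ U := by
  have h := hnorm (-q) (neg_mem hq) (-a)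
  rw [sub_neg_eq_add] at h
  exact add_mem h hq

/-- conjugation form used for the D-pieces: `-q + z + q ∈ U`. -/
lemma conj_shape_mem {U : AddSubgroup B}
    (hnorm : ∀ z ∈ U, ∀ b : B, b + z - b ∈ U) {z : B} (hz : z ∈ U) (q : B) :
    -q + z + q ∈ U := by
  have h := hnorm z hz (-q)
  rwa [sub_neg_eq_add] at h

/-! ### chains of ideals -/

def Chain (K L : AddSubgroup B) : Prop :=
  ∃ (n : ℕ) (I : ℕ → AddSubgroup B),
    I 0 = K ∧ I n = L ∧
    (∀ j, SkewBrace.IsIdeal (I j)) ∧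
    (∀ j, j < n → I j ≤ I (j + 1)) ∧
    (∀ j, j < n → ∀ x ∈ I (j + 1), ∀ a : B,
      σ a x ∈ I j ∧ σ x a ∈ I j ∧ (-a + -x + a + x) ∈ I j)

lemma Chain.refl {K : AddSubgroup B} (hK : SkewBrace.IsIdeal K) : Chain K K :=
  ⟨0, fun _ => K, rfl, rfl, fun _ => hK, fun j hj => absurd hj (Nat.not_lt_zero j),
    fun j hj => absurd hj (Nat.not_lt_zero j)⟩

lemma Chain.trans {K L M : AddSubgroup B} (h1 : Chain K L) (h2 : Chain L M) :
    Chain K M := by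
  obtain ⟨n₁, I₁, hI₁0, hI₁n, hid₁, hmono₁, hcent₁⟩ := h1
  obtain ⟨n₂, I₂, hI₂0, hI₂n, hid₂, hmono₂, hcent₂⟩ := h2
  refine ⟨n₁ + n₂, fun j => if j ≤ n₁ then I₁ j else I₂ (j - n₁), ?_, ?_, ?_, ?_, ?_⟩
  · simp only [Nat.zero_le, if_pos]; exact hI₁0
  · dsimp only
    by_cases h : n₂ = 0
    · subst h
      simp only [Nat.add_zero, le_refl, if_pos]
      rw [hI₁n, ← hI₂0, ← hI₂n]
    · rw [if_neg (by omega), Nat.add_sub_cancel_left, hI₂n]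
  · intro j
    dsimp only
    by_cases h : j ≤ n₁
    · rw [if_pos h]; exact hid₁ j
    · rw [if_neg h]; exact hid₂ _
  · intro j hj
    dsimp only
    by_cases h : j + 1 ≤ n₁
    · rw [if_pos h, if_pos (by omega)]
      exact hmono₁ j (by omega)
    · by_cases h' : j ≤ n₁
      · have hj' : j = n₁ := by omega
        subst hj'
        rw [if_pos h', if_neg h, Nat.add_sub_cancel_left, hI₁n, ← hI₂0]
        exact hmono₂ 0 (by omega)
      · rw [if_neg h', if_neg h]
        have e : j + 1 - n₁ = (j - n₁) + 1 := by omega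
        rw [e]
        exact hmono₂ (j - n₁) (by omega)
  · intro j hj x hx a
    dsimp only at hx ⊢
    by_cases h : j + 1 ≤ n₁
    · rw [if_pos h] at hx
      rw [if_pos (show j ≤ n₁ by omega)]
      exact hcent₁ j (by omega) x hx a
    · by_cases h' : j ≤ n₁
      · have hj' : j = n₁ := by omega
        subst hj'
        rw [if_neg h, Nat.add_sub_cancel_left] at hx
        rw [if_pos h', hI₁n, ← hI₂0]
        exact hcent₂ 0 (by omega) x (by rwa [show (0:ℕ)+1 = 1 from rfl]) a
      · rw [if_neg h] at hx
        rw [if_neg h']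
        have e : j + 1 - n₁ = (j - n₁) + 1 := by omega
        rw [e] at hx
        exact hcent₂ (j - n₁) (by omega) x hx a

lemma Chain.ofSeq (F : ℕ → AddSubgroup B) (M : ℕ)
    (hid : ∀ m, SkewBrace.IsIdeal (F m))
    (hmono : ∀ m, m < M → F m ≤ F (m+1))
    (hcent : ∀ m, m < M → ∀ x ∈ F (m+1), ∀ a : B,
      σ a x ∈ F m ∧ σ x a ∈ F m ∧ (-a + -x + a + x) ∈ F m) :
    Chain (F 0) (F M) :=
  ⟨M, F, rfl, rfl, hid, hmono, hcent⟩

end SkewBraceProof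
end Part7
section Part8
namespace SkewBraceProof
open AddSubgroup
variable {B : Type*} [SkewBrace B]
local notation "σ" => SkewBrace.star (B := B)
local notation "A𝔸" => SkewBrace.leftSeries B 1

/-- bottom blocks -/
def Fb (B : Type*) [SkewBrace B] (i m : ℕ) : AddSubgroup B :=
  DS B (i+1) ⊔ (DS B i ⊓ Zc B m)

/-- top blocks -/
def Ft (B : Type*) [SkewBrace B] (m : ℕ) : AddSubgroup B :=
  SkewBrace.leftSeries B 1 ⊔ Zc B m

section WithH3h
variable (h3 : SkewBrace.leftSeries B 2 = ⊥)
include h3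

lemma Fb_le_A {i m : ℕ} : Fb B i m ≤ (A𝔸) :=
  sup_le (DS_le_A h3) (le_trans inf_le_left (DS_le_A h3))

omit h3 in
lemma Fb_normal {i m : ℕ} : ∀ z ∈ Fb B i m, ∀ b : B, b + z - b ∈ Fb B i m := by
  intro z hz b
  let S : AddSubgroup B :=
    { carrier := {z | ∀ b : B, b + z - b ∈ Fb B i m}
      zero_mem' := by intro b; simp only [add_zero, sub_self]; exact zero_mem _
      add_mem' := by
        intro z w hz hw b
        rw [sub_eq_add_neg, ag_conj_add]
        exact add_mem (by rw [← sub_eq_add_neg]; exact hz b)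
          (by rw [← sub_eq_add_neg]; exact hw b)
      neg_mem' := by
        intro z hz b
        rw [sub_eq_add_neg, ag_conj_neg]
        exact neg_mem (by rw [← sub_eq_add_neg]; exact hz b) }
  have hle : Fb B i m ≤ S := by
    apply sup_le
    · intro z hz b
      exact le_sup_left (a := DS B (i+1)) (DS_normal z hz b)
    · rintro z ⟨hz1, hz2⟩ b
      exact le_sup_right (a := DS B (i+1))
        (AddSubgroup.mem_inf.mpr ⟨DS_normal z hz1 b, Zc_normal hz2 b⟩)
  exact hle hz b

lemma Fb_ideal {i m : ℕ} : SkewBrace.IsIdeal (Fb B i m) := by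
  refine ⟨Fb_normal, ?_, ?_⟩
  · -- right stars
    intro z hz b
    let T : AddSubgroup B :=
      { carrier := {z | z ∈ (A𝔸) ∧ ∀ b : B, σ z b ∈ Fb B i m}
        zero_mem' := ⟨zero_mem _, fun d => by rw [star_zero_left]; exact zero_mem _⟩
        add_mem' := by
          rintro z w ⟨hzA, hz⟩ ⟨hwA, hw⟩
          exact ⟨add_mem hzA hwA, fun d => by
            rw [star_antiadd h3 hzA hwA d]; exact add_mem (hw d) (hz d)⟩
        neg_mem' := by
          rintro z ⟨hzA, hz⟩
          exact ⟨neg_mem hzA, fun d => by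
            rw [star_neg_A h3 hzA d]; exact neg_mem (hz d)⟩ }
    have hle : Fb B i m ≤ T := by
      apply sup_le
      · intro z hz
        refine ⟨DS_le_A h3 hz, fun d => ?_⟩
        exact le_sup_left (a := DS B (i+1)) (gamA_le_DS h3 (DS_star h3 z hz d))
      · rintro z ⟨hz1, hz2⟩
        refine ⟨DS_le_A h3 hz1, fun d => ?_⟩
        obtain ⟨ξ, hξ, heq⟩ := DS_R4 h3 hz1 d
        rw [heq]
        refine add_mem (le_sup_left (a := DS B (i+1)) hξ) ?_
        refine le_sup_right (a := DS B (i+1)) (AddSubgroup.mem_inf.mpr ⟨?_, ?_⟩)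
        · exact comm_shape_mem DS_normal hz1 d
        · exact comm_shape_mem (fun z hz b => Zc_normal hz b) hz2 d
    exact (hle hz).2 b
  · -- left stars vanish
    intro z hz b
    rw [star_fix h3 (Fb_le_A h3 hz) b]
    exact zero_mem _

lemma Fb_zero {i : ℕ} : Fb B i 0 = DS B (i+1) := by
  rw [Fb, Zc_zero, inf_bot_eq, sup_bot_eq]

lemma Fb_top {i N : ℕ} (hN : Zc B N = ⊤) : Fb B i N = DS B i := by
  rw [Fb, hN, inf_top_eq, sup_eq_right.mpr (DS_succ_le h3)]

omit h3 in
lemma Fb_mono {i m : ℕ} : Fb B i m ≤ Fb B i (m+1) :=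
  sup_le_sup_left (inf_le_inf_left _ (Zc_mono (Nat.le_succ m))) _

lemma Fb_cent {i m : ℕ} : ∀ x ∈ Fb B i (m+1), ∀ a : B,
    σ a x ∈ Fb B i m ∧ σ x a ∈ Fb B i m ∧ (-a + -x + a + x) ∈ Fb B i m := by
  intro x hx a
  obtain ⟨p, hp, q, hq, rfl⟩ := mem_sup_decomp DS_normal hx
  obtain ⟨hq1, hq2⟩ := AddSubgroup.mem_inf.mp hq
  have hpA : p ∈ (A𝔸) := DS_le_A h3 hp
  have hqA : q ∈ (A𝔸) := DS_le_A h3 hq1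
  refine ⟨?_, ?_, ?_⟩
  · rw [star_fix h3 (add_mem hpA hqA) a]; exact zero_mem _
  · rw [star_antiadd h3 hpA hqA a]
    refine add_mem ?_ (le_sup_left (a := DS B (i+1)) (gamA_le_DS h3 (DS_star h3 p hp a)))
    obtain ⟨ξ, hξ, heq⟩ := DS_R4 h3 hq1 a
    rw [heq]
    refine add_mem (le_sup_left (a := DS B (i+1)) hξ) ?_
    refine le_sup_right (a := DS B (i+1)) (AddSubgroup.mem_inf.mpr ⟨?_, ?_⟩)
    · exact comm_shape_mem DS_normal hq1 a
    · exact Zc_comm2 hq2 a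
  · rw [ag_comm_split a p q]
    refine add_mem ?_ ?_
    · refine le_sup_right (a := DS B (i+1)) (AddSubgroup.mem_inf.mpr ⟨?_, ?_⟩)
      · exact comm_shape2_mem DS_normal hq1 a
      · exact Zc_comm1 hq2 a
    · refine le_sup_left (a := DS B (i+1)) ?_
      exact conj_shape_mem DS_normal (comm_shape2_mem DS_normal hp a) q

lemma chain_block {i N : ℕ} (hN : Zc B N = ⊤) : Chain (DS B (i+1)) (DS B i) := by
  have h := Chain.ofSeq (Fb B i) N (fun m => Fb_ideal h3) (fun m _ => Fb_mono)
    (fun m _ => Fb_cent h3)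
  rwa [Fb_zero h3, Fb_top h3 hN] at h

lemma DS_ideal {n : ℕ} : SkewBrace.IsIdeal (DS B n) := by
  refine ⟨DS_normal, ?_, ?_⟩
  · intro z hz b
    exact gamA_le_DS h3 (DS_star h3 z hz b)
  · intro z hz b
    rw [star_fix h3 (DS_le_A h3 hz) b]
    exact zero_mem _

lemma chain_bot {N : ℕ} (hN : Zc B N = ⊤) : ∀ k, Chain (DS B k) (DS B 0)
  | 0 => Chain.refl (DS_ideal h3)
  | k+1 => Chain.trans (chain_block h3 hN) (chain_bot hN k)

/-! top blocks -/

omit h3 in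
lemma Ft_normal {m : ℕ} : ∀ z ∈ Ft B m, ∀ b : B, b + z - b ∈ Ft B m := by
  intro z hz b
  let S : AddSubgroup B :=
    { carrier := {z | ∀ b : B, b + z - b ∈ Ft B m}
      zero_mem' := by intro b; simp only [add_zero, sub_self]; exact zero_mem _
      add_mem' := by
        intro z w hz hw b
        rw [sub_eq_add_neg, ag_conj_add]
        exact add_mem (by rw [← sub_eq_add_neg]; exact hz b)
          (by rw [← sub_eq_add_neg]; exact hw b)
      neg_mem' := by
        intro z hz b
        rw [sub_eq_add_neg, ag_conj_neg]
        exact neg_mem (by rw [← sub_eq_add_neg]; exact hz b) }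
  have hle : Ft B m ≤ S := by
    apply sup_le
    · intro z hz b
      exact le_sup_left (a := (A𝔸)) (A_normal z hz b)
    · intro z hz b
      exact le_sup_right (a := (A𝔸)) (Zc_normal hz b)
  exact hle hz b

lemma Ft_star_left {m : ℕ} {x : B} (hx : x ∈ Ft B m) (a : B) : σ a x ∈ Ft B m := by
  obtain ⟨z, hz, s, hs, rfl⟩ := mem_sup_decomp A_normal hx
  rw [star_add_right a z s, star_fix h3 hz a, zero_add]
  exact le_sup_left (a := (A𝔸)) (A_normal _ (star_mem_A a s) z)

lemma Ft_ideal {m : ℕ} : SkewBrace.IsIdeal (Ft B m) := by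
  refine ⟨Ft_normal, ?_, ?_⟩
  · intro z hz b
    exact le_sup_left (a := (A𝔸)) (star_mem_A z b)
  · intro z hz b
    exact Ft_star_left h3 hz b

omit h3 in
lemma Ft_zero : Ft B 0 = (A𝔸) := by
  rw [Ft, Zc_zero, sup_bot_eq]

omit h3 in
lemma Ft_top {N : ℕ} (hN : Zc B N = ⊤) : Ft B N = ⊤ := by
  rw [Ft, hN, sup_top_eq]

omit h3 in
lemma Ft_mono {m : ℕ} : Ft B m ≤ Ft B (m+1) :=
  sup_le_sup_left (Zc_mono (Nat.le_succ m)) _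

lemma Ft_cent {m : ℕ} : ∀ x ∈ Ft B (m+1), ∀ a : B,
    σ a x ∈ Ft B m ∧ σ x a ∈ Ft B m ∧ (-a + -x + a + x) ∈ Ft B m := by
  intro x hx a
  obtain ⟨z, hz, s, hs, rfl⟩ := mem_sup_decomp A_normal hx
  refine ⟨?_, ?_, ?_⟩
  · rw [star_add_right a z s, star_fix h3 hz a, zero_add]
    exact le_sup_left (a := (A𝔸)) (A_normal _ (star_mem_A a s) z)
  · exact le_sup_left (a := (A𝔸)) (star_mem_A _ a)
  · rw [ag_comm_split a z s]
    refine add_mem ?_ ?_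
    · exact le_sup_right (a := (A𝔸)) (Zc_comm1 hs a)
    · exact le_sup_left (a := (A𝔸))
        (conj_shape_mem A_normal (comm_shape2_mem A_normal hz a) s)

lemma chain_top {N : ℕ} (hN : Zc B N = ⊤) : Chain (A𝔸) (⊤ : AddSubgroup B) := by
  have h := Chain.ofSeq (Ft B) N (fun m => Ft_ideal h3) (fun m _ => Ft_mono)
    (fun m _ => Ft_cent h3)
  rwa [Ft_zero, Ft_top hN] at h

end WithH3h
end SkewBraceProof
end Part8

open SkewBrace in
theorem centrally_nilpotent_of_left_class_two
    (B : Type*) [SkewBrace B]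
    [Group.IsNilpotent (Multiplicative B)]
    (h3 : leftSeries B 2 = ⊥) :
    CentrallyNilpotent B := by
  classical
  obtain ⟨N, hN⟩ := SkewBraceProof.Zc_exists_top (B := B)
  have c1 : SkewBraceProof.Chain (⊥ : AddSubgroup B) (leftSeries B 1) := by
    have h := SkewBraceProof.chain_bot h3 hN (N + N)
    rwa [SkewBraceProof.DS_bot h3 hN, SkewBraceProof.DS_zero h3] at h
  have c2 := SkewBraceProof.chain_top h3 hN
  obtain ⟨n, I, h0, hn, hid, hmono, hcent⟩ := SkewBraceProof.Chain.trans c1 c2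
  exact ⟨n, I, h0, hn, hid, hmono, hcent⟩
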